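/- arXiv:2001.01812 — 5 statements merged into one kernel-verified Lean document; each statement's English description precedes it below -/
import Mathlib

section
/- Let n ≥ 2k, and suppose F* ⊆ F ⊆ binom([n],k) are such that whenever A, B ∈ F satisfy A ∩ B = ∅, both A and B lie in F*. Then |F| ≤ C(n-1, k-1) + ((n-k)/n)·|F*|. -/
open Finset

-- sum over biUnion is at most sum of sums (ℕ)
lemma sum_biUnion_le' {ι α : Type*} [DecidableEq α] (s : Finset ι) (t : ι → Finset α)
    (f : α → ℕ) : ((s.biUnion t).sum f) ≤ s.sum (fun i => (t i).sum f) := by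
  classical
  induction s using Finset.induction_on with
  | empty => simp
  | insert _ _ h ih =>
    rename_i a s
    rw [Finset.biUnion_insert, Finset.sum_insert h]
    calc ((t a ∪ s.biUnion t).sum f) ≤ (t a).sum f + (s.biUnion t).sum f := by
          have h2 := Finset.sum_union_inter (s₁ := t a) (s₂ := s.biUnion t) (f := f)
          rw [← h2]
          exact Nat.le_add_right _ _
      _ ≤ (t a).sum f + s.sum (fun i => (t i).sum f) := by omega

lemma keyLemma (n k : ℕ) [NeZero n] (hk : 0 < k) (hn : 2 * k ≤ n)
    (D P : Finset (ZMod n)) (hPD : P ⊆ D)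
    (hdp : ∀ i ∈ D, ∀ j ∈ D, k ≤ (j - i).val → (j - i).val ≤ n - k → i ∈ P ∧ j ∈ P) :
    n * (D \ P).card + k * P.card ≤ n * k := by
  classical
  have hkn : k < n := by omega
  rcases Finset.eq_empty_or_nonempty (D \ P) with hDP | ⟨q, hq⟩
  · rw [hDP]
    simp only [Finset.card_empty, Nat.mul_zero, Nat.zero_add]
    calc k * P.card ≤ k * n := by
          have : P.card ≤ n := by
            have := Finset.card_le_univ P
            simpa [ZMod.card] using this
          exact Nat.mul_le_mul_left _ this
      _ = n * k := Nat.mul_comm _ _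
  · obtain ⟨hqD, hqP⟩ := Finset.mem_sdiff.mp hq
    have hnear : ∀ j ∈ D, (j - q).val < k ∨ n - k < (j - q).val := by
      intro j hj
      by_contra h
      push_neg at h
      exact hqP (hdp q hqD j hj h.1 h.2).1
    set w : ZMod n → ℕ := fun x => if x ∈ D then (if x ∈ P then k else n) else 0 with hw
    have wle : ∀ x, w x ≤ n := by
      intro x; simp only [hw]; split_ifs <;> omega
    set pairset : ℕ → Finset (ZMod n) :=
      fun t => if t = 0 then {q} else {q + (t : ZMod n) - (k : ZMod n), q + (t : ZMod n)}
      with hps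
    have hcast : ∀ j : ZMod n, j = q + (((j - q).val : ℕ) : ZMod n) := by
      intro j
      rw [ZMod.natCast_rightInverse (j - q)]
      ring
    have cover : D ⊆ (Finset.range k).biUnion pairset := by
      intro j hj
      rcases hnear j hj with hlt | hgt
      · rcases Nat.eq_zero_or_pos (j - q).val with h0 | h0
        · refine Finset.mem_biUnion.mpr ⟨0, Finset.mem_range.mpr hk, ?_⟩
          simp only [hps, if_pos rfl, Finset.mem_singleton]
          have h1 := hcast j
          rw [h0] at h1
          simpa using h1
        · refine Finset.mem_biUnion.mpr ⟨(j - q).val, Finset.mem_range.mpr hlt, ?_⟩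
          simp only [hps, if_neg (Nat.pos_iff_ne_zero.mp h0), Finset.mem_insert,
            Finset.mem_singleton]
          right; exact hcast j
      · have hvlt : (j - q).val < n := ZMod.val_lt _
        set t := (j - q).val - (n - k) with ht
        have ht1 : t ≠ 0 := by omega
        have ht2 : t < k := by omega
        refine Finset.mem_biUnion.mpr ⟨t, Finset.mem_range.mpr ht2, ?_⟩
        simp only [hps, if_neg ht1, Finset.mem_insert, Finset.mem_singleton]
        left
        have hval : (j - q).val = t + (n - k) := by omega
        have hc : (((j - q).val : ℕ) : ZMod n) = (t : ZMod n) - (k : ZMod n) := by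
          rw [hval, Nat.cast_add, Nat.cast_sub (by omega : k ≤ n)]
          simp [ZMod.natCast_self]
          ring
        have h1 := hcast j
        rw [hc] at h1
        rw [h1]; ring
    have hpair : ∀ t ∈ Finset.range k, (pairset t).sum w ≤ n := by
      intro t htk
      rcases eq_or_ne t 0 with h0 | h0
      · simp only [hps, h0, if_pos rfl, Finset.sum_singleton]
        exact wle q
      · simp only [hps, if_neg h0]
        set a := q + (t : ZMod n) - (k : ZMod n) with hadef
        set b := q + (t : ZMod n) with hbdef
        have hba : b - a = (k : ZMod n) := by rw [hadef, hbdef]; ring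
        have hbav : (b - a).val = k := by rw [hba, ZMod.val_natCast_of_lt hkn]
        have hboth : a ∈ D → b ∈ D → a ∈ P ∧ b ∈ P := fun ha hb =>
          hdp a ha b hb (le_of_eq hbav.symm) (by omega)
        rcases eq_or_ne a b with he | he
        · rw [he, Finset.pair_eq_singleton, Finset.sum_singleton]
          exact wle b
        · rw [Finset.sum_pair he]
          by_cases haD : a ∈ D
          · by_cases hbD : b ∈ D
            · obtain ⟨haP, hbP⟩ := hboth haD hbD
              simp only [hw, if_pos haD, if_pos hbD, if_pos haP, if_pos hbP]
              omega
            · have : w b = 0 := by simp [hw, hbD]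
              rw [this]
              simpa using wle a
          · have : w a = 0 := by simp [hw, haD]
            rw [this]
            simpa using wle b
    have h1 : (D \ P).sum w = (D \ P).card * n := by
      rw [Finset.sum_congr rfl (fun x hx => ?_), Finset.sum_const, smul_eq_mul]
      obtain ⟨hxD, hxP⟩ := Finset.mem_sdiff.mp hx
      simp [hw, hxD, hxP]
    have h2 : P.sum w = P.card * k := by
      rw [Finset.sum_congr rfl (fun x hx => ?_), Finset.sum_const, smul_eq_mul]
      simp [hw, hPD hx, hx]
    have hDsum : D.sum w = (D \ P).card * n + P.card * k := by
      rw [← Finset.sum_sdiff hPD, h1, h2]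
    calc n * (D \ P).card + k * P.card = D.sum w := by rw [hDsum]; ring
      _ ≤ ((Finset.range k).biUnion pairset).sum w := Finset.sum_le_sum_of_subset cover
      _ ≤ (Finset.range k).sum (fun t => (pairset t).sum w) := sum_biUnion_le' _ _ _
      _ ≤ (Finset.range k).sum (fun _ => n) := Finset.sum_le_sum hpair
      _ = k * n := by simp [Finset.sum_const, Nat.mul_comm]
      _ = n * k := Nat.mul_comm _ _


lemma fiber_card {α : Type*} [Fintype α] [DecidableEq α] (k : ℕ) (hk : k ≤ Fintype.card α)
    (S A : Finset α) (hS : S.card = k) (hA : A.card = k) :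
    (Finset.univ.filter (fun σ : Equiv.Perm α => S.image σ = A)).card
      = k.factorial * (Fintype.card α - k).factorial := by
  classical
  have hconst : ∀ A₁ A₂ : Finset α, A₁.card = k → A₂.card = k →
      (Finset.univ.filter (fun σ : Equiv.Perm α => S.image σ = A₁)).card
        = (Finset.univ.filter (fun σ : Equiv.Perm α => S.image σ = A₂)).card := by
    intro A₁ A₂ h1 h2
    have e : {x // x ∈ A₁} ≃ {x // x ∈ A₂} := Finset.equivOfCardEq (h1.trans h2.symm)
    set τ : Equiv.Perm α := e.extendSubtype with hτdef
    have hτ : A₁.image τ = A₂ := by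
      apply Finset.eq_of_subset_of_card_le
      · intro x hx
        obtain ⟨y, hy, rfl⟩ := Finset.mem_image.mp hx
        exact e.extendSubtype_mem y hy
      · rw [Finset.card_image_of_injective _ τ.injective, h1, h2]
    have himg : ∀ (ρ : Equiv.Perm α) (B C : Finset α), B.image ρ = C →
        ∀ ρ' : Equiv.Perm α, S.image ρ' = B → S.image ⇑(ρ * ρ') = C := by
      intro ρ B C hBC ρ' hρ'
      rw [show ⇑(ρ * ρ') = ⇑ρ ∘ ⇑ρ' from rfl, ← Finset.image_image, hρ', hBC]
    have hτ' : A₂.image ⇑τ⁻¹ = A₁ := by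
      rw [← hτ, Finset.image_image]
      have : (⇑τ⁻¹ ∘ ⇑τ) = id := by
        funext x; simp
      rw [this, Finset.image_id]
    apply Finset.card_bij' (i := fun σ _ => τ * σ) (j := fun σ _ => τ⁻¹ * σ)
    · intro σ hσ
      simp only [Finset.mem_filter, Finset.mem_univ, true_and] at hσ ⊢
      exact himg τ A₁ A₂ hτ σ hσ
    · intro σ hσ
      simp only [Finset.mem_filter, Finset.mem_univ, true_and] at hσ ⊢
      exact himg τ⁻¹ A₂ A₁ hτ' σ hσ
    · intro σ hσ; group
    · intro σ hσ; group
  have hmem : ∀ σ ∈ (Finset.univ : Finset (Equiv.Perm α)),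
      S.image σ ∈ Finset.powersetCard k (Finset.univ : Finset α) := by
    intro σ _
    rw [Finset.mem_powersetCard]
    exact ⟨Finset.subset_univ _, by rw [Finset.card_image_of_injective _ σ.injective, hS]⟩
  have hsum := Finset.card_eq_sum_card_fiberwise hmem
  have hcard : ∀ B ∈ Finset.powersetCard k (Finset.univ : Finset α),
      (Finset.univ.filter (fun σ : Equiv.Perm α => S.image σ = B)).card
        = (Finset.univ.filter (fun σ : Equiv.Perm α => S.image σ = A)).card := by
    intro B hB
    exact hconst B A (Finset.mem_powersetCard.mp hB).2 hA
  rw [Finset.sum_congr rfl hcard, Finset.sum_const, smul_eq_mul,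
    Finset.card_powersetCard, Finset.card_univ, Finset.card_univ, Fintype.card_perm] at hsum
  have hch := Nat.choose_mul_factorial_mul_factorial hk
  have hpos : 0 < (Fintype.card α).choose k := Nat.choose_pos hk
  apply Nat.eq_of_mul_eq_mul_left hpos
  rw [← hsum, ← hch]
  ring


lemma arc_card (n k : ℕ) [NeZero n] (hkn : k ≤ n) (i : ZMod n) :
    ((Finset.range k).image (fun t : ℕ => i + (t : ZMod n))).card = k := by
  rw [Finset.card_image_of_injOn, Finset.card_range]
  intro t₁ h₁ t₂ h₂ h
  have h' : ((t₁ : ℕ) : ZMod n) = ((t₂ : ℕ) : ZMod n) := by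
    have := add_left_cancel h
    exact this
  have v := congrArg ZMod.val h'
  rw [ZMod.val_natCast_of_lt (lt_of_lt_of_le (Finset.mem_range.mp h₁) hkn |>.trans_le (le_refl n)),
    ZMod.val_natCast_of_lt (lt_of_lt_of_le (Finset.mem_range.mp h₂) hkn)] at v
  exact v

lemma arc_disjoint (n k : ℕ) [NeZero n] (i j : ZMod n)
    (h1 : k ≤ (j - i).val) (h2 : (j - i).val ≤ n - k) :
    Disjoint ((Finset.range k).image (fun t : ℕ => i + (t : ZMod n)))
      ((Finset.range k).image (fun t : ℕ => j + (t : ZMod n))) := by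
  rw [Finset.disjoint_left]
  rintro x hxi hxj
  obtain ⟨t, ht, rfl⟩ := Finset.mem_image.mp hxi
  obtain ⟨s, hs, hst⟩ := Finset.mem_image.mp hxj
  rw [Finset.mem_range] at ht hs
  have hd : (((j - i).val : ℕ) : ZMod n) = j - i := ZMod.natCast_rightInverse _
  have hdlt : (j - i).val < n := ZMod.val_lt _
  have heq : ((t : ℕ) : ZMod n) = (((j - i).val + s : ℕ) : ZMod n) := by
    push_cast
    rw [hd]
    have : i + (t : ZMod n) = j + (s : ZMod n) := hst.symm
    linear_combination this
  have v := congrArg ZMod.val heq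
  rw [ZMod.val_natCast_of_lt (by omega), ZMod.val_natCast_of_lt (by omega)] at v
  omega

theorem stmt_1 (n k : ℕ) (hnk : 2 * k ≤ n)
    (F Fs : Finset (Finset (Fin n))) (hsub : Fs ⊆ F)
    (hF : ∀ A ∈ F, A.card = k)
    (hd : ∀ A ∈ F, ∀ B ∈ F, A ∩ B = ∅ → A ∈ Fs ∧ B ∈ Fs) :
    (F.card : ℚ) ≤ (n - 1).choose (k - 1) + ((n : ℚ) - k) / n * Fs.card := by
  classical
  rcases Nat.eq_zero_or_pos k with hk0 | hk
  · subst hk0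
    have hFss : F ⊆ {∅} := by
      intro A hA
      rw [Finset.mem_singleton]
      exact Finset.card_eq_zero.mp (hF A hA)
    have hcard : F.card ≤ 1 := by
      calc F.card ≤ ({∅} : Finset (Finset (Fin n))).card := Finset.card_le_card hFss
        _ = 1 := rfl
    have h1 : (((n - 1).choose (0 - 1) : ℕ) : ℚ) = 1 := by norm_num
    have h2 : (0:ℚ) ≤ ((n:ℚ) - 0) / n * Fs.card := by
      apply mul_nonneg
      · apply div_nonneg <;> simp
      · positivity
    have : (F.card : ℚ) ≤ 1 := by exact_mod_cast hcard
    push_cast at h2 ⊢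
    linarith
  · haveI : NeZero n := ⟨by omega⟩
    have hkn : k ≤ n := by omega
    set c : ℕ := k.factorial * (n - k).factorial with hc
    set I : ZMod n → Finset (ZMod n) :=
      fun i => (Finset.range k).image (fun t : ℕ => i + (t : ZMod n)) with hI
    obtain ⟨e⟩ : Nonempty (ZMod n ≃ Fin n) :=
      ⟨Fintype.equivOfCardEq (by simp [ZMod.card])⟩
    set Sarc : ZMod n → Finset (Fin n) := fun i => (I i).image e with hSarc
    set arc : Equiv.Perm (Fin n) → ZMod n → Finset (Fin n) :=
      fun σ i => (Sarc i).image σ with harc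
    have hScard : ∀ i, (Sarc i).card = k := by
      intro i
      rw [hSarc]
      rw [Finset.card_image_of_injective _ e.injective]
      exact arc_card n k hkn i
    -- counting lemma
    have hcount : ∀ G : Finset (Finset (Fin n)), G ⊆ F →
        ∑ σ : Equiv.Perm (Fin n),
          (Finset.univ.filter fun i : ZMod n => arc σ i ∈ G).card = G.card * (n * c) := by
      intro G hGF
      have h1 : ∀ σ : Equiv.Perm (Fin n),
          (Finset.univ.filter fun i : ZMod n => arc σ i ∈ G).card
            = ∑ i : ZMod n, (if arc σ i ∈ G then 1 else 0) := by
        intro σ; rw [Finset.card_filter]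
      rw [Finset.sum_congr rfl (fun σ _ => h1 σ), Finset.sum_comm]
      have h2 : ∀ i : ZMod n,
          ∑ σ : Equiv.Perm (Fin n), (if arc σ i ∈ G then 1 else 0) = G.card * c := by
        intro i
        rw [← Finset.card_filter]
        have hmem : ∀ σ ∈ (Finset.univ.filter fun σ : Equiv.Perm (Fin n) => arc σ i ∈ G),
            arc σ i ∈ G := fun σ hσ => (Finset.mem_filter.mp hσ).2
        rw [Finset.card_eq_sum_card_fiberwise hmem]
        have h3 : ∀ A ∈ G,
            ((Finset.univ.filter fun σ : Equiv.Perm (Fin n) => arc σ i ∈ G).filter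
              fun σ => arc σ i = A).card = c := by
          intro A hA
          have hff : (Finset.univ.filter fun σ : Equiv.Perm (Fin n) => arc σ i ∈ G).filter
              (fun σ => arc σ i = A)
              = Finset.univ.filter (fun σ : Equiv.Perm (Fin n) => (Sarc i).image σ = A) := by
            ext σ
            simp only [Finset.mem_filter, Finset.mem_univ, true_and, harc]
            constructor
            · exact fun h => h.2
            · exact fun h => ⟨h ▸ hA, h⟩
          rw [hff, hc]
          have := fiber_card k (by simpa using hkn) (Sarc i) A (hScard i) (hF A (hGF hA))
          simpa using this
        rw [Finset.sum_congr rfl h3, Finset.sum_const, smul_eq_mul]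
      rw [Finset.sum_congr rfl (fun i _ => h2 i), Finset.sum_const, Finset.card_univ,
        ZMod.card, smul_eq_mul]
      ring
    -- per-permutation inequality
    have hper : ∀ σ : Equiv.Perm (Fin n),
        n * (Finset.univ.filter fun i : ZMod n => arc σ i ∈ F \ Fs).card
          + k * (Finset.univ.filter fun i : ZMod n => arc σ i ∈ Fs).card ≤ n * k := by
      intro σ
      set D := Finset.univ.filter fun i : ZMod n => arc σ i ∈ F with hD
      set P := Finset.univ.filter fun i : ZMod n => arc σ i ∈ Fs with hP
      have hPD : P ⊆ D := by
        intro i hi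
        rw [hP, Finset.mem_filter] at hi
        rw [hD, Finset.mem_filter]
        exact ⟨hi.1, hsub hi.2⟩
      have hDP : (Finset.univ.filter fun i : ZMod n => arc σ i ∈ F \ Fs) = D \ P := by
        ext i
        simp only [hD, hP, Finset.mem_filter, Finset.mem_sdiff, Finset.mem_univ, true_and]
      rw [hDP]
      refine keyLemma n k hk hnk D P hPD ?_
      intro i hi j hj h1 h2
      have hdisj : Disjoint (I i) (I j) := arc_disjoint n k i j h1 h2
      have hdisj2 : Disjoint (arc σ i) (arc σ j) := by
        rw [harc, hSarc]
        simp only [Finset.image_image]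
        rw [Finset.disjoint_image (Function.Injective.comp σ.injective e.injective)]
        exact hdisj
      have hinter : arc σ i ∩ arc σ j = ∅ := Finset.disjoint_iff_inter_eq_empty.mp hdisj2
      have hres := hd (arc σ i) ((Finset.mem_filter.mp hi).2) (arc σ j)
        ((Finset.mem_filter.mp hj).2) hinter
      exact ⟨Finset.mem_filter.mpr ⟨Finset.mem_univ _, hres.1⟩,
        Finset.mem_filter.mpr ⟨Finset.mem_univ _, hres.2⟩⟩
    -- sum over σ
    have htot : ∑ σ : Equiv.Perm (Fin n),
        (n * (Finset.univ.filter fun i : ZMod n => arc σ i ∈ F \ Fs).card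
          + k * (Finset.univ.filter fun i : ZMod n => arc σ i ∈ Fs).card)
        ≤ ∑ _σ : Equiv.Perm (Fin n), n * k :=
      Finset.sum_le_sum (fun σ _ => hper σ)
    rw [Finset.sum_add_distrib, ← Finset.mul_sum, ← Finset.mul_sum,
      hcount (F \ Fs) (Finset.sdiff_subset), hcount Fs hsub,
      Finset.sum_const, Finset.card_univ, Fintype.card_perm, Fintype.card_fin,
      smul_eq_mul] at htot
    -- divide out n * c
    have hfact : n.factorial = n.choose k * c := by
      rw [hc, ← Nat.choose_mul_factorial_mul_factorial hkn]
      ring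
    have hmul : (n * (F \ Fs).card + k * Fs.card) * (n * c)
        ≤ (k * n.choose k) * (n * c) := by
      calc (n * (F \ Fs).card + k * Fs.card) * (n * c)
          = n * ((F \ Fs).card * (n * c)) + k * (Fs.card * (n * c)) := by ring
        _ ≤ n.factorial * (n * k) := htot
        _ = (k * n.choose k) * (n * c) := by rw [hfact]; ring
    have hpos : 0 < n * c := by
      have h1 : 0 < c := Nat.mul_pos k.factorial_pos (n - k).factorial_pos
      have h2 : 0 < n := by omega
      exact Nat.mul_pos h2 h1
    have hkey : n * (F \ Fs).card + k * Fs.card ≤ k * n.choose k :=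
      Nat.le_of_mul_le_mul_right hmul hpos
    have hid : k * n.choose k = n * Nat.choose (n-1) (k-1) := by
      have h := Nat.add_one_mul_choose_eq (n-1) (k-1)
      have hn1 : n - 1 + 1 = n := by omega
      have hk1 : k - 1 + 1 = k := by omega
      simp only [Nat.succ_eq_add_one, hn1, hk1] at h
      rw [h]
      ring
    rw [hid] at hkey
    -- rational arithmetic
    have hQ : (n:ℚ) * ((F \ Fs).card : ℚ) + (k:ℚ) * (Fs.card : ℚ)
        ≤ (n:ℚ) * ((n-1).choose (k-1) : ℚ) := by exact_mod_cast hkey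
    have hFsplit : ((F \ Fs).card : ℚ) + (Fs.card : ℚ) = (F.card : ℚ) := by
      exact_mod_cast Finset.card_sdiff_add_card_eq_card hsub
    have hn0 : (0:ℚ) < n := by
      have : 0 < n := by omega
      exact_mod_cast this
    refine le_of_mul_le_mul_right ?_ hn0
    rw [add_mul]
    have hexp : (((n:ℚ) - k) / n * Fs.card) * n = ((n:ℚ) - k) * Fs.card := by
      field_simp
    rw [hexp]
    have hkQ : (k:ℚ) ≤ n := by exact_mod_cast hkn
    nlinarith [hQ, hFsplit]
end

section
/- Let n ≥ 2k, let σ be a cyclic ordering of [n], and let F* ⊆ F ⊆ binom([n],k) be such that any two disjoint members of F lie in F*. Let S_σ(G) denote the set of members of G that appear as intervals of length k in σ. If S_σ(F \ F*) is nonempty, then |S_σ(F \ F*)| ≤ k and |S_σ(F*)| ≤ 2(k − |S_σ(F \ F*)|). -/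
/-- The interval of length `k` starting at position `i` in the cyclic ordering `σ`. -/
def itv {n : ℕ} (σ : ZMod n ≃ Fin n) (i k : ℕ) : Finset (Fin n) :=
  (Finset.range k).image (fun j => σ (((i + j : ℕ) : ZMod n)))

/-- The members of `G` appearing as intervals of length `k` in the cyclic ordering `σ`. -/
def Scyc {n : ℕ} (σ : ZMod n ≃ Fin n) (k : ℕ) (G : Finset (Finset (Fin n))) :
    Finset (Finset (Fin n)) :=
  G.filter (fun A => ∃ i < n, A = itv σ i k)

/-- The interval of length `k` starting at a point of `ZMod n`. -/
def itvZ {n : ℕ} (σ : ZMod n ≃ Fin n) (z : ZMod n) (k : ℕ) : Finset (Fin n) :=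
  (Finset.range k).image (fun j : ℕ => σ (z + (j : ZMod n)))

lemma itv_eq_itvZ {n : ℕ} (σ : ZMod n ≃ Fin n) (i k : ℕ) :
    itv σ i k = itvZ σ (i : ZMod n) k := by
  unfold itv itvZ
  have h : (fun j : ℕ => σ (((i + j : ℕ) : ZMod n)))
      = (fun j : ℕ => σ ((i : ZMod n) + (j : ZMod n))) := by
    funext j
    push_cast
    ring_nf
  rw [h]

lemma mem_itvZ {n : ℕ} (σ : ZMod n ≃ Fin n) {z : ZMod n} {k : ℕ} {x : Fin n} :
    x ∈ itvZ σ z k ↔ ∃ j < k, σ (z + (j : ZMod n)) = x := by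
  simp [itvZ]

lemma natCast_inj_of_lt {n a b : ℕ} (ha : a < n) (hb : b < n)
    (h : (a : ZMod n) = (b : ZMod n)) : a = b := by
  have := congrArg ZMod.val h
  rwa [ZMod.val_cast_of_lt ha, ZMod.val_cast_of_lt hb] at this

lemma itvZ_disj {n : ℕ} (σ : ZMod n ≃ Fin n) (k : ℕ) (hk : 1 ≤ k) (hn : 2 * k ≤ n)
    (z : ZMod n) : itvZ σ z k ∩ itvZ σ (z + (k : ZMod n)) k = ∅ := by
  rw [Finset.eq_empty_iff_forall_notMem]
  intro x hx
  rw [Finset.mem_inter, mem_itvZ, mem_itvZ] at hx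
  obtain ⟨⟨j, hj, hxj⟩, ⟨j', hj', hxj'⟩⟩ := hx
  have h : z + (j : ZMod n) = z + (k : ZMod n) + (j' : ZMod n) :=
    σ.injective (hxj.trans hxj'.symm)
  have h2 : ((j : ℕ) : ZMod n) = ((k + j' : ℕ) : ZMod n) := by
    push_cast
    rw [add_assoc] at h
    exact add_left_cancel h
  have := natCast_inj_of_lt (by omega) (by omega) h2
  omega

lemma itv_injOn {n : ℕ} (σ : ZMod n ≃ Fin n) (k : ℕ) (hk : 1 ≤ k) (hn : 2 * k ≤ n) :
    ∀ i < n, ∀ i' < n, itv σ i k = itv σ i' k → i = i' := by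
  intro i hi i' hi' h
  rw [itv_eq_itvZ, itv_eq_itvZ] at h
  have h1 : σ ((i' : ZMod n) + ((0 : ℕ) : ZMod n)) ∈ itvZ σ (i' : ZMod n) k :=
    (mem_itvZ σ).mpr ⟨0, hk, rfl⟩
  rw [← h, mem_itvZ] at h1
  obtain ⟨j, hj, hj1⟩ := h1
  have e1 : (i : ZMod n) + (j : ZMod n) = (i' : ZMod n) := by
    have := σ.injective hj1
    simpa using this
  have h2 : σ ((i : ZMod n) + ((0 : ℕ) : ZMod n)) ∈ itvZ σ (i : ZMod n) k :=
    (mem_itvZ σ).mpr ⟨0, hk, rfl⟩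
  rw [h, mem_itvZ] at h2
  obtain ⟨j', hj', hj2⟩ := h2
  have e2 : (i' : ZMod n) + (j' : ZMod n) = (i : ZMod n) := by
    have := σ.injective hj2
    simpa using this
  have e3 : ((j + j' : ℕ) : ZMod n) = ((0 : ℕ) : ZMod n) := by
    push_cast
    have : (i : ZMod n) + ((j : ZMod n) + (j' : ZMod n)) = (i : ZMod n) + 0 := by
      rw [← add_assoc, e1, e2, add_zero]
    exact add_left_cancel this
  have := natCast_inj_of_lt (by omega) (by omega) e3
  have hj0 : j = 0 := by omega
  subst hj0
  apply natCast_inj_of_lt hi hi'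
  simpa using e1

lemma Scyc_eq_image {n : ℕ} (σ : ZMod n ≃ Fin n) (k : ℕ) (G : Finset (Finset (Fin n))) :
    Scyc σ k G = ((Finset.range n).filter (fun i => itv σ i k ∈ G)).image
      (fun i => itv σ i k) := by
  ext A
  simp only [Scyc, Finset.mem_filter, Finset.mem_image, Finset.mem_range]
  constructor
  · rintro ⟨hA, i, hi, rfl⟩
    exact ⟨i, ⟨hi, hA⟩, rfl⟩
  · rintro ⟨i, ⟨hi, hA⟩, rfl⟩
    exact ⟨hA, i, hi, rfl⟩

theorem stmt_4 (n k : ℕ) (hnk : 2 * k ≤ n) (σ : ZMod n ≃ Fin n)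
    (F Fs : Finset (Finset (Fin n))) (hsub : Fs ⊆ F)
    (hF : ∀ A ∈ F, A.card = k)
    (hd : ∀ A ∈ F, ∀ B ∈ F, A ∩ B = ∅ → A ∈ Fs ∧ B ∈ Fs)
    (hne : (Scyc σ k (F \ Fs)).Nonempty) :
    (Scyc σ k (F \ Fs)).card ≤ k ∧
      (Scyc σ k Fs).card ≤ 2 * (k - (Scyc σ k (F \ Fs)).card) := by
  classical
  rcases Nat.eq_zero_or_pos k with hk0 | hk
  · -- degenerate case k = 0
    obtain ⟨A, hA⟩ := hne
    rw [Scyc, Finset.mem_filter] at hA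
    obtain ⟨hAmem, i, hi, hAi⟩ := hA
    rw [Finset.mem_sdiff] at hAmem
    have hAe : A = ∅ := by simp [itv, hk0] at hAi; exact hAi
    have := (hd A hAmem.1 A hAmem.1 (by simp [hAe])).1
    exact absurd this hAmem.2
  -- main case
  haveI : NeZero n := ⟨by omega⟩
  obtain ⟨A₀, hA₀⟩ := hne
  rw [Scyc, Finset.mem_filter] at hA₀
  obtain ⟨hA₀mem, i₀, hi₀n, hA₀eq⟩ := hA₀
  set P : Finset ℕ := (Finset.range n).filter (fun i => itv σ i k ∈ F \ Fs) with hPdef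
  set Q : Finset ℕ := (Finset.range n).filter (fun i => itv σ i k ∈ Fs) with hQdef
  have hinj := itv_injOn σ k hk hnk
  have hPlt : ∀ i ∈ P, i < n := fun i hi => Finset.mem_range.mp (Finset.mem_filter.mp hi).1
  have hQlt : ∀ i ∈ Q, i < n := fun i hi => Finset.mem_range.mp (Finset.mem_filter.mp hi).1
  have hPmem : ∀ i ∈ P, itv σ i k ∈ F \ Fs := fun i hi => (Finset.mem_filter.mp hi).2
  have hQmem : ∀ i ∈ Q, itv σ i k ∈ Fs := fun i hi => (Finset.mem_filter.mp hi).2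
  have cardP : (Scyc σ k (F \ Fs)).card = P.card := by
    rw [Scyc_eq_image]
    apply Finset.card_image_of_injOn
    intro i hi i' hi' h
    exact hinj i (hPlt i hi) i' (hPlt i' hi') h
  have cardQ : (Scyc σ k Fs).card = Q.card := by
    rw [Scyc_eq_image]
    apply Finset.card_image_of_injOn
    intro i hi i' hi' h
    exact hinj i (hQlt i hi) i' (hQlt i' hi') h
  -- i₀ is in P
  have hi₀P : i₀ ∈ P := by
    rw [hPdef, Finset.mem_filter, Finset.mem_range]
    exact ⟨hi₀n, hA₀eq ▸ hA₀mem⟩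
  -- membership in P ∪ Q gives membership in F
  have hPQF : ∀ i ∈ P ∪ Q, itv σ i k ∈ F := by
    intro i hi
    rcases Finset.mem_union.mp hi with h | h
    · exact (Finset.mem_sdiff.mp (hPmem i h)).1
    · exact hsub (hQmem i h)
  have hPQlt : ∀ i ∈ P ∪ Q, i < n := by
    intro i hi
    rcases Finset.mem_union.mp hi with h | h
    · exact hPlt i h
    · exact hQlt i h
  -- non-disjointness: everything in P ∪ Q meets everything in P
  have hnd : ∀ i ∈ P ∪ Q, ∀ i' ∈ P, itv σ i k ∩ itv σ i' k ≠ ∅ := by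
    intro i hi i' hi' hdisj
    have h2 := Finset.mem_sdiff.mp (hPmem i' hi')
    exact h2.2 (hd _ (hPQF i hi) _ h2.1 hdisj).2
  -- the position function
  set c : ZMod n := ((k - 1 : ℕ) : ZMod n) with hc
  set g : ℕ → ℕ := fun i => ((i : ZMod n) - (i₀ : ZMod n) + c).val with hg
  have hgZ : ∀ i : ℕ, ((g i : ℕ) : ZMod n) = (i : ZMod n) - (i₀ : ZMod n) + c := by
    intro i
    simp [hg, ZMod.natCast_val, ZMod.cast_id]
  have hginj : ∀ i < n, ∀ i' < n, g i = g i' → i = i' := by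
    intro i hi i' hi' h
    have h1 : ((g i : ℕ) : ZMod n) = ((g i' : ℕ) : ZMod n) := by rw [h]
    rw [hgZ, hgZ] at h1
    have : (i : ZMod n) = (i' : ZMod n) := by
      have h2 := add_right_cancel h1
      exact sub_left_inj.mp h2
    exact natCast_inj_of_lt hi hi' this
  -- range of g on P ∪ Q
  have hgrange : ∀ i ∈ P ∪ Q, g i < 2 * k - 1 := by
    intro i hi
    have hmeet := hnd i hi i₀ hi₀P
    rw [← Finset.nonempty_iff_ne_empty] at hmeet
    obtain ⟨x, hx⟩ := hmeet
    rw [Finset.mem_inter, itv_eq_itvZ, itv_eq_itvZ, mem_itvZ, mem_itvZ] at hx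
    obtain ⟨⟨j, hj, hxj⟩, ⟨j', hj', hxj'⟩⟩ := hx
    have h1 : (i : ZMod n) + (j : ZMod n) = (i₀ : ZMod n) + (j' : ZMod n) :=
      σ.injective (hxj.trans hxj'.symm)
    set d : ℕ := j' + (k - 1) - j with hd'
    have hdlt : d < 2 * k - 1 := by omega
    have h2 : ((d : ℕ) : ZMod n) + (j : ZMod n) = (j' : ZMod n) + c := by
      rw [hc]
      have : (d + j : ℕ) = j' + (k - 1) := by omega
      calc ((d : ℕ) : ZMod n) + (j : ZMod n) = ((d + j : ℕ) : ZMod n) := by push_cast; ring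
        _ = ((j' + (k - 1) : ℕ) : ZMod n) := by rw [this]
        _ = (j' : ZMod n) + ((k - 1 : ℕ) : ZMod n) := by push_cast; ring
    have h3 : ((g i : ℕ) : ZMod n) = ((d : ℕ) : ZMod n) := by
      rw [hgZ]
      linear_combination h1 - h2
    have : g i = d := by
      apply natCast_inj_of_lt _ (by omega) h3
      exact (ZMod.val_lt _)
    omega
  -- the partner relation: if g i' = g i + k with i ∈ P then contradiction
  have claimk : ∀ i ∈ P, ∀ i' ∈ P ∪ Q, g i' ≠ g i + k := by
    intro i hi i' hi' hcon
    have h1 : ((g i' : ℕ) : ZMod n) = ((g i + k : ℕ) : ZMod n) := by rw [hcon]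
    rw [hgZ] at h1
    have h2 : (i' : ZMod n) = (i : ZMod n) + (k : ZMod n) := by
      have h3 : ((g i + k : ℕ) : ZMod n) = ((g i : ℕ) : ZMod n) + (k : ZMod n) := by
        push_cast; ring
      rw [h3, hgZ] at h1
      linear_combination h1
    have hdisj := itvZ_disj σ k hk hnk (i : ZMod n)
    apply hnd i' hi' i hi
    rw [itv_eq_itvZ, itv_eq_itvZ, h2, Finset.inter_comm]
    exact hdisj
  -- symmetric partner relation
  have claimk2 : ∀ i ∈ P, ∀ i' ∈ P ∪ Q, g i ≠ g i' + k := by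
    intro i hi i' hi' hcon
    have h1 : ((g i : ℕ) : ZMod n) = ((g i' + k : ℕ) : ZMod n) := by rw [hcon]
    rw [hgZ] at h1
    have h2 : (i : ZMod n) = (i' : ZMod n) + (k : ZMod n) := by
      have h3 : ((g i' + k : ℕ) : ZMod n) = ((g i' : ℕ) : ZMod n) + (k : ZMod n) := by
        push_cast; ring
      rw [h3, hgZ] at h1
      linear_combination h1
    have hdisj := itvZ_disj σ k hk hnk (i' : ZMod n)
    apply hnd i' hi' i hi
    rw [itv_eq_itvZ σ i', itv_eq_itvZ σ i, h2]
    exact hdisj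
  -- set up images
  set gP : Finset ℕ := P.image g with hgP
  set gQ : Finset ℕ := Q.image g with hgQ
  have cardgP : gP.card = P.card :=
    Finset.card_image_of_injOn (fun i hi i' hi' h => hginj i (hPlt i hi) i' (hPlt i' hi') h)
  have cardgQ : gQ.card = Q.card :=
    Finset.card_image_of_injOn (fun i hi i' hi' h => hginj i (hQlt i hi) i' (hQlt i' hi') h)
  set pid : ℕ → ℕ := fun d => if k ≤ d then d - k else d with hpid
  -- pid is injective on gP
  have pid_injP : ∀ x ∈ gP, ∀ y ∈ gP, pid x = pid y → x = y := by
    intro x hx y hy h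
    obtain ⟨i, hiP, rfl⟩ := Finset.mem_image.mp hx
    obtain ⟨i', hi'P, rfl⟩ := Finset.mem_image.mp hy
    have hb1 : g i < 2 * k - 1 := hgrange i (Finset.mem_union_left _ hiP)
    have hb2 : g i' < 2 * k - 1 := hgrange i' (Finset.mem_union_left _ hi'P)
    have htri : g i = g i' ∨ g i' = g i + k ∨ g i = g i' + k := by
      simp only [hpid] at h; split_ifs at h <;> omega
    rcases htri with h | h | h
    · exact h
    · exact absurd h (claimk i hiP i' (Finset.mem_union_left _ hi'P))
    · exact absurd h (claimk i' hi'P i (Finset.mem_union_left _ hiP))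
  -- images under pid of gP and gQ are disjoint
  have pid_disj : ∀ x ∈ gP, ∀ y ∈ gQ, pid x ≠ pid y := by
    intro x hx y hy h
    obtain ⟨i, hiP, rfl⟩ := Finset.mem_image.mp hx
    obtain ⟨i', hi'Q, rfl⟩ := Finset.mem_image.mp hy
    have hb1 : g i < 2 * k - 1 := hgrange i (Finset.mem_union_left _ hiP)
    have hb2 : g i' < 2 * k - 1 := hgrange i' (Finset.mem_union_right _ hi'Q)
    have htri : g i = g i' ∨ g i' = g i + k ∨ g i = g i' + k := by
      simp only [hpid] at h; split_ifs at h <;> omega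
    rcases htri with h | h | h
    · have : i = i' := hginj i (hPlt i hiP) i' (hQlt i' hi'Q) h
      subst this
      exact (Finset.mem_sdiff.mp (hPmem i hiP)).2 (hQmem i hi'Q)
    · exact claimk i hiP i' (Finset.mem_union_right _ hi'Q) h
    · exact claimk2 i hiP i' (Finset.mem_union_right _ hi'Q) h
  -- bounds on members of gP and gQ
  have hgPlt : ∀ x ∈ gP, x < 2 * k - 1 := by
    intro x hx
    obtain ⟨i, hiP, rfl⟩ := Finset.mem_image.mp hx
    exact hgrange i (Finset.mem_union_left _ hiP)
  have hgQlt : ∀ x ∈ gQ, x < 2 * k - 1 := by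
    intro x hx
    obtain ⟨i, hiQ, rfl⟩ := Finset.mem_image.mp hx
    exact hgrange i (Finset.mem_union_right _ hiQ)
  have pid_lt : ∀ x, x < 2 * k - 1 → pid x < k := by
    intro x hx
    simp only [hpid]
    split_ifs <;> omega
  set pP : Finset ℕ := gP.image pid with hpP
  set pQ : Finset ℕ := gQ.image pid with hpQ
  have cardpP : pP.card = gP.card := Finset.card_image_of_injOn pid_injP
  have hsubP : pP ⊆ Finset.range k := by
    intro x hx
    obtain ⟨y, hy, rfl⟩ := Finset.mem_image.mp hx
    exact Finset.mem_range.mpr (pid_lt y (hgPlt y hy))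
  have hsubQ : pQ ⊆ Finset.range k := by
    intro x hx
    obtain ⟨y, hy, rfl⟩ := Finset.mem_image.mp hx
    exact Finset.mem_range.mpr (pid_lt y (hgQlt y hy))
  have hdisjPQ : Disjoint pP pQ := by
    rw [Finset.disjoint_left]
    intro a haP haQ
    obtain ⟨x, hx, hxa⟩ := Finset.mem_image.mp haP
    obtain ⟨y, hy, hya⟩ := Finset.mem_image.mp haQ
    exact pid_disj x hx y hy (hxa.trans hya.symm)
  have hsum : pP.card + pQ.card ≤ k := by
    rw [← Finset.card_union_of_disjoint hdisjPQ]
    calc (pP ∪ pQ).card ≤ (Finset.range k).card :=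
          Finset.card_le_card (Finset.union_subset hsubP hsubQ)
      _ = k := Finset.card_range k
  have hQ2 : gQ.card ≤ 2 * pQ.card := by
    apply Finset.card_le_mul_card_image
    intro b hb
    have hsub2 : (gQ.filter (fun x => pid x = b)) ⊆ ({b, b + k} : Finset ℕ) := by
      intro x hx
      obtain ⟨hxQ, hpx⟩ := Finset.mem_filter.mp hx
      have hxlt : x < 2 * k - 1 := hgQlt x hxQ
      have : x = b ∨ x = b + k := by
        simp only [hpid] at hpx
        split_ifs at hpx <;> omega
      simp only [Finset.mem_insert, Finset.mem_singleton]
      exact this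
    calc (gQ.filter (fun x => pid x = b)).card ≤ ({b, b + k} : Finset ℕ).card :=
          Finset.card_le_card hsub2
      _ ≤ 2 := Finset.card_insert_le _ _ |>.trans (by simp)
  rw [cardP, cardQ]
  have e1 : pP.card = P.card := by rw [cardpP, cardgP]
  have e2 : Q.card ≤ 2 * pQ.card := by rw [← cardgQ]; exact hQ2
  omega
end

section
/- Suppose k < n and F ⊆ binom([n],k) satisfies |F| ≥ C(n-1,k-1). Then Σ_{A ∈ F} [ |α¹_F(A)| + ((n-k-1)/(2(n-k)))·|α²_F(A)| ] ≤ C(n-1, k-1). -/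
/-- The shade of `D` in `F`: all members of `F` containing `D`. -/
def shade {n : ℕ} (F : Finset (Finset (Fin n))) (D : Finset (Fin n)) :
    Finset (Finset (Fin n)) :=
  F.filter (fun B => D ⊆ B)

/-- `alpha F i A` is the set of `x ∈ A` such that exactly `i` members of `F`
contain `A \ {x}`. -/
def alpha {n : ℕ} (F : Finset (Finset (Fin n))) (i : ℕ) (A : Finset (Fin n)) :
    Finset (Fin n) :=
  A.filter (fun x => (shade F (A.erase x)).card = i)

/-- Auxiliary: the set of `(k-1)`-sets whose shade in `F` has exactly `i` members. -/
def degSet {n : ℕ} (F : Finset (Finset (Fin n))) (k i : ℕ) : Finset (Finset (Fin n)) :=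
  Finset.univ.filter (fun D => D.card = k - 1 ∧ (shade F D).card = i)

lemma sum_alpha_eq {n k : ℕ} (hk : 1 ≤ k) (F : Finset (Finset (Fin n)))
    (hF : ∀ A ∈ F, A.card = k) (i : ℕ) :
    ∑ A ∈ F, (alpha F i A).card = i * (degSet F k i).card := by
  classical
  have h1 : ∑ A ∈ F, (alpha F i A).card = (F.sigma (fun A => alpha F i A)).card :=
    (Finset.card_sigma _ _).symm
  have h2 : ((degSet F k i).sigma (fun D => shade F D)).card = i * (degSet F k i).card := by
    rw [Finset.card_sigma,
      Finset.sum_congr rfl (fun D hD => ((Finset.mem_filter.mp hD).2).2)]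
    simp [mul_comm]
  rw [h1, ← h2]
  apply Finset.card_bij
    (fun p _ => (⟨p.1.erase p.2, p.1⟩ : (_ : Finset (Fin n)) × Finset (Fin n)))
  · rintro ⟨A, x⟩ hp
    rw [Finset.mem_sigma] at hp
    obtain ⟨hA, hx⟩ := hp
    rw [alpha, Finset.mem_filter] at hx
    rw [Finset.mem_sigma]
    constructor
    · rw [degSet, Finset.mem_filter]
      refine ⟨Finset.mem_univ _, ?_, hx.2⟩
      rw [Finset.card_erase_of_mem hx.1, hF A hA]
    · rw [shade, Finset.mem_filter]
      exact ⟨hA, Finset.erase_subset _ _⟩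
  · rintro ⟨A, x⟩ hp ⟨A', x'⟩ hp' h
    rw [Finset.mem_sigma] at hp hp'
    have hx : x ∈ A := (Finset.mem_filter.mp hp.2).1
    obtain ⟨h1, h2⟩ := Sigma.mk.inj_iff.mp h
    have hAA : A = A' := eq_of_heq h2
    subst hAA
    have hxx : x = x' := (Finset.erase_inj A hx).mp h1
    subst hxx
    rfl
  · rintro ⟨D, A⟩ hb
    rw [Finset.mem_sigma] at hb
    obtain ⟨hD, hA⟩ := hb
    rw [degSet, Finset.mem_filter] at hD
    rw [shade, Finset.mem_filter] at hA
    obtain ⟨-, hDcard, hDdeg⟩ := hD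
    obtain ⟨hAF, hDA⟩ := hA
    have hcard : (A \ D).card = 1 := by
      rw [Finset.card_sdiff_of_subset hDA, hF A hAF, hDcard]; omega
    obtain ⟨x, hxs⟩ := Finset.card_eq_one.mp hcard
    have hxmem : x ∈ A \ D := hxs ▸ Finset.mem_singleton_self x
    have hxA : x ∈ A := (Finset.mem_sdiff.mp hxmem).1
    have hxD : x ∉ D := (Finset.mem_sdiff.mp hxmem).2
    have hED : A.erase x = D := by
      refine (Finset.eq_of_subset_of_card_le (Finset.subset_erase.mpr ⟨hDA, hxD⟩) ?_).symm
      rw [Finset.card_erase_of_mem hxA, hF A hAF, hDcard]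
    refine ⟨⟨A, x⟩, ?_, ?_⟩
    · rw [Finset.mem_sigma]
      refine ⟨hAF, ?_⟩
      rw [alpha, Finset.mem_filter]
      exact ⟨hxA, by rw [hED]; exact hDdeg⟩
    · simp [hED]

lemma card_sup_filter {n k : ℕ} (hk : 1 ≤ k) (hkn : k ≤ n) (D : Finset (Fin n))
    (hD : D.card = k - 1) :
    (Finset.univ.filter (fun B : Finset (Fin n) => B.card = k ∧ D ⊆ B)).card = n - k + 1 := by
  classical
  have hc : (Dᶜ).card = n - k + 1 := by
    rw [Finset.card_compl, hD, Fintype.card_fin]; omega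
  rw [← hc]
  refine (Finset.card_bij (fun x _ => insert x D) ?_ ?_ ?_).symm
  · intro x hx
    rw [Finset.mem_compl] at hx
    rw [Finset.mem_filter]
    refine ⟨Finset.mem_univ _, ?_, Finset.subset_insert _ _⟩
    rw [Finset.card_insert_of_notMem hx, hD]; omega
  · intro x hx y hy h
    rw [Finset.mem_compl] at hx hy
    have h' : insert x D = insert y D := h
    have : x ∈ insert y D := h' ▸ Finset.mem_insert_self x D
    rcases Finset.mem_insert.mp this with h' | h'
    · exact h'
    · exact absurd h' hx
  · intro B hB
    rw [Finset.mem_filter] at hB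
    obtain ⟨-, hBk, hDB⟩ := hB
    have hcard : (B \ D).card = 1 := by
      rw [Finset.card_sdiff_of_subset hDB, hBk, hD]; omega
    obtain ⟨x, hxs⟩ := Finset.card_eq_one.mp hcard
    have hxmem : x ∈ B \ D := hxs ▸ Finset.mem_singleton_self x
    have hxB : x ∈ B := (Finset.mem_sdiff.mp hxmem).1
    have hxD : x ∉ D := (Finset.mem_sdiff.mp hxmem).2
    refine ⟨x, Finset.mem_compl.mpr hxD, ?_⟩
    apply Finset.eq_of_subset_of_card_le (Finset.insert_subset hxB hDB)
    rw [Finset.card_insert_of_notMem hxD, hBk, hD]; omega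

lemma key_count {n k : ℕ} (hk : 1 ≤ k) (hkn : k ≤ n) (F : Finset (Finset (Fin n)))
    (hF : ∀ A ∈ F, A.card = k) :
    (n - k) * (degSet F k 1).card + (n - k - 1) * (degSet F k 2).card + k * F.card
      ≤ k * n.choose k := by
  classical
  set U : Finset (Fin n) → Finset (Finset (Fin n)) :=
    fun D => Finset.univ.filter (fun B : Finset (Fin n) => B.card = k ∧ D ⊆ B ∧ B ∉ F)
    with hU
  set K : Finset (Finset (Fin n)) := (Finset.univ : Finset (Fin n)).powersetCard k \ F with hK
  have hFsub : F ⊆ (Finset.univ : Finset (Fin n)).powersetCard k := by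
    intro A hA
    rw [Finset.mem_powersetCard]
    exact ⟨Finset.subset_univ _, hF A hA⟩
  have hFle : F.card ≤ n.choose k := by
    have := Finset.card_le_card hFsub
    rwa [Finset.card_powersetCard, Finset.card_univ, Fintype.card_fin] at this
  -- card of fibers
  have hUcard : ∀ i D, D ∈ degSet F k i → (U D).card = n - k + 1 - i := by
    intro i D hDi
    rw [degSet, Finset.mem_filter] at hDi
    obtain ⟨-, hDcard, hDdeg⟩ := hDi
    have hshade_sub : shade F D ⊆ Finset.univ.filter
        (fun B : Finset (Fin n) => B.card = k ∧ D ⊆ B) := by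
      intro B hB
      rw [shade, Finset.mem_filter] at hB
      rw [Finset.mem_filter]
      exact ⟨Finset.mem_univ _, hF B hB.1, hB.2⟩
    have hUeq : U D = (Finset.univ.filter
        (fun B : Finset (Fin n) => B.card = k ∧ D ⊆ B)) \ shade F D := by
      ext B
      simp only [hU, Finset.mem_filter, Finset.mem_sdiff, Finset.mem_univ, true_and,
        shade, Finset.mem_filter]
      tauto
    rw [hUeq, Finset.card_sdiff_of_subset hshade_sub, card_sup_filter hk hkn D hDcard, hDdeg]
  -- disjointness of degSets
  have hdisj : Disjoint (degSet F k 1) (degSet F k 2) := by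
    rw [Finset.disjoint_left]
    intro D h1 h2
    rw [degSet, Finset.mem_filter] at h1 h2
    omega
  -- injection of the sigma set into K.sigma powersetCard (k-1)
  have hinj : (((degSet F k 1) ∪ (degSet F k 2)).sigma U).card
      ≤ (K.sigma (fun B => B.powersetCard (k - 1))).card := by
    apply Finset.card_le_card_of_injOn
      (fun p => (⟨p.2, p.1⟩ : (_ : Finset (Fin n)) × Finset (Fin n)))
    · rintro ⟨D, B⟩ hp
      rw [Finset.mem_coe, Finset.mem_sigma] at hp
      obtain ⟨hD, hB⟩ := hp
      simp only [hU, Finset.mem_filter, Finset.mem_univ, true_and] at hB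
      obtain ⟨hBk, hDB, hBF⟩ := hB
      have hDcard : D.card = k - 1 := by
        rcases Finset.mem_union.mp hD with h' | h' <;>
          exact ((Finset.mem_filter.mp h').2).1
      rw [Finset.mem_coe, Finset.mem_sigma]
      constructor
      · rw [hK, Finset.mem_sdiff, Finset.mem_powersetCard]
        exact ⟨⟨Finset.subset_univ _, hBk⟩, hBF⟩
      · rw [Finset.mem_powersetCard]
        exact ⟨hDB, hDcard⟩
    · rintro ⟨D, B⟩ hp ⟨D', B'⟩ hp' h
      simp only [Sigma.mk.inj_iff] at h
      obtain ⟨h1, h2⟩ := h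
      have h2' : D = D' := eq_of_heq h2
      subst h2'; subst h1; rfl
  -- compute both sigma cards
  have hleft : (((degSet F k 1) ∪ (degSet F k 2)).sigma U).card
      = (n - k) * (degSet F k 1).card + (n - k - 1) * (degSet F k 2).card := by
    rw [Finset.card_sigma, Finset.sum_union hdisj]
    have e1 : ∀ D ∈ degSet F k 1, (U D).card = n - k := by
      intro D hD; rw [hUcard 1 D hD]; omega
    have e2 : ∀ D ∈ degSet F k 2, (U D).card = n - k - 1 := by
      intro D hD; rw [hUcard 2 D hD]; omega
    rw [Finset.sum_congr rfl e1, Finset.sum_congr rfl e2, Finset.sum_const,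
      Finset.sum_const, smul_eq_mul, smul_eq_mul, mul_comm, mul_comm ((degSet F k 2).card)]
  have hright : (K.sigma (fun B => B.powersetCard (k - 1))).card = k * K.card := by
    rw [Finset.card_sigma]
    have e : ∀ B ∈ K, (B.powersetCard (k - 1)).card = k := by
      intro B hB
      rw [hK, Finset.mem_sdiff, Finset.mem_powersetCard] at hB
      rw [Finset.card_powersetCard, hB.1.2, Nat.choose_symm hk, Nat.choose_one_right]
    rw [Finset.sum_congr rfl e, Finset.sum_const, smul_eq_mul, mul_comm]
  have hKcard : K.card = n.choose k - F.card := by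
    rw [hK, Finset.card_sdiff_of_subset hFsub, Finset.card_powersetCard, Finset.card_univ,
      Fintype.card_fin]
  have hmain : (n - k) * (degSet F k 1).card + (n - k - 1) * (degSet F k 2).card
      ≤ k * (n.choose k - F.card) := by
    rw [← hleft, ← hKcard, ← hright]
    exact hinj
  calc (n - k) * (degSet F k 1).card + (n - k - 1) * (degSet F k 2).card + k * F.card
      ≤ k * (n.choose k - F.card) + k * F.card := by omega
    _ = k * n.choose k := by rw [← Nat.mul_add, Nat.sub_add_cancel hFle]

theorem stmt_8 (n k : ℕ) (hkn : k < n)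
    (F : Finset (Finset (Fin n))) (hF : ∀ A ∈ F, A.card = k)
    (hsize : (n - 1).choose (k - 1) ≤ F.card) :
    ∑ A ∈ F, (((alpha F 1 A).card : ℚ) +
        ((n : ℚ) - k - 1) / (2 * ((n : ℚ) - k)) * (alpha F 2 A).card) ≤
      (n - 1).choose (k - 1) := by
  classical
  rcases Nat.eq_zero_or_pos k with hk0 | hk
  · subst hk0
    have hz : ∀ A ∈ F, ((alpha F 1 A).card : ℚ) +
        ((n : ℚ) - 0 - 1) / (2 * ((n : ℚ) - 0)) * (alpha F 2 A).card = 0 := by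
      intro A hA
      have hAe : A = ∅ := Finset.card_eq_zero.mp (hF A hA)
      subst hAe
      simp [alpha]
    rw [Finset.sum_congr rfl (by exact_mod_cast hz), Finset.sum_const_zero]
    positivity
  · obtain ⟨k', rfl⟩ : ∃ k', k = k' + 1 := ⟨k - 1, by omega⟩
    obtain ⟨n', rfl⟩ : ∃ n', n = n' + 1 := ⟨n - 1, by omega⟩
    have hk'n' : k' < n' := by omega
    have h1 := sum_alpha_eq (by omega) F hF 1
    have h2 := sum_alpha_eq (by omega) F hF 2
    have hkey := key_count (by omega) (by omega) F hF
    set d1 := (degSet F (k' + 1) 1).card with hd1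
    set d2 := (degSet F (k' + 1) 2).card with hd2
    have hsub1 : n' + 1 - (k' + 1) = n' - k' := by omega
    have hsub2 : n' + 1 - (k' + 1) - 1 = n' - k' - 1 := by omega
    rw [hsub2, hsub1] at hkey
    have hsize' : n'.choose k' ≤ F.card := by simpa using hsize
    have hrec : (n' + 1).choose (k' + 1) = n'.choose k' + n'.choose (k' + 1) :=
      Nat.choose_succ_succ n' k'
    have hid : n'.choose (k' + 1) * (k' + 1) = n'.choose k' * (n' - k') :=
      Nat.choose_succ_right_eq n' k'
    have hnat : (n' - k') * d1 + (n' - k' - 1) * d2 ≤ (n' - k') * n'.choose k' := by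
      have hmono : (k' + 1) * n'.choose k' ≤ (k' + 1) * F.card :=
        Nat.mul_le_mul_left _ hsize'
      have hstep : (n' - k') * d1 + (n' - k' - 1) * d2 + (k' + 1) * n'.choose k'
          ≤ (k' + 1) * n'.choose k' + (k' + 1) * n'.choose (k' + 1) := by
        calc (n' - k') * d1 + (n' - k' - 1) * d2 + (k' + 1) * n'.choose k'
            ≤ (n' - k') * d1 + (n' - k' - 1) * d2 + (k' + 1) * F.card := by omega
          _ ≤ (k' + 1) * (n' + 1).choose (k' + 1) := hkey
          _ = (k' + 1) * n'.choose k' + (k' + 1) * n'.choose (k' + 1) := by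
              rw [hrec, Nat.mul_add]
        done
      have : (n' - k') * d1 + (n' - k' - 1) * d2 ≤ (k' + 1) * n'.choose (k' + 1) := by omega
      calc (n' - k') * d1 + (n' - k' - 1) * d2
          ≤ (k' + 1) * n'.choose (k' + 1) := this
        _ = (n' - k') * n'.choose k' := by rw [mul_comm, hid, mul_comm]
    -- pass to ℚ
    have hE1 : (1 : ℕ) ≤ n' - k' := by omega
    set E : ℚ := ((n' - k' : ℕ) : ℚ) with hE
    have hEeq : E = (n' : ℚ) - (k' : ℚ) := by
      rw [hE, Nat.cast_sub (le_of_lt hk'n')]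
    have hEpos : 0 < E := by
      rw [hEeq]
      have : (k' : ℚ) < (n' : ℚ) := by exact_mod_cast hk'n'
      linarith
    have hE1Q : (1 : ℚ) ≤ E := by
      rw [hE]; exact_mod_cast hE1
    have hQ : E * d1 + (E - 1) * d2 ≤ E * (n'.choose k' : ℚ) := by
      have := (Nat.cast_le (α := ℚ)).mpr hnat
      push_cast [Nat.cast_sub (le_of_lt hk'n'), Nat.cast_sub hE1] at this
      rw [hEeq]
      convert this using 2 <;> push_cast [Nat.cast_sub (le_of_lt hk'n')] <;> ring
    -- rewrite the sum
    rw [Finset.sum_add_distrib, ← Finset.mul_sum, ← Nat.cast_sum, ← Nat.cast_sum, h1, h2]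
    have hc : ((n' : ℚ) + 1 - ((k' : ℚ) + 1) - 1) / (2 * ((n' : ℚ) + 1 - ((k' : ℚ) + 1)))
        = (E - 1) / (2 * E) := by
      rw [hEeq]; ring_nf
    have hcast : ((n' + 1 : ℕ) : ℚ) - ((k' + 1 : ℕ) : ℚ) - 1 = E - 1 := by
      push_cast; rw [hEeq]; ring
    have hcast2 : 2 * (((n' + 1 : ℕ) : ℚ) - ((k' + 1 : ℕ) : ℚ)) = 2 * E := by
      push_cast; rw [hEeq]; ring
    push_cast
    rw [show ((n' : ℚ) + 1 - ((k' : ℚ) + 1) - 1) = E - 1 by rw [hEeq]; ring] 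
    rw [show (2 * ((n' : ℚ) + 1 - ((k' : ℚ) + 1))) = 2 * E by rw [hEeq]; ring]
    have hfin : (d1 : ℚ) + (E - 1) / (2 * E) * (2 * d2)
        = (E * d1 + (E - 1) * d2) / E := by
      field_simp
    rw [one_mul, hfin, div_le_iff₀ hEpos]
    calc E * d1 + (E - 1) * d2 ≤ E * (n'.choose k' : ℚ) := hQ
      _ = (n'.choose k' : ℚ) * E := by ring
end

section
/- Let F ⊆ binom([n],k) with d ≤ k. Then for each A ∈ F, the number of d-subsets D of A with A ∈ ∇*_F(D) equals C(k,d) − C(|A \ α¹_F(A)|, d) + C(|α²_F(A)|, d), where ∇*_F(D) = {A ∈ ∇_F(D) : D ∩ α¹_F(A) ≠ ∅ or D ⊆ α²_F(A)}. -/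
/-- `shadeStar F D`: members `A` of the shade of `D` with `D ∩ α¹_F(A) ≠ ∅` or
`D ⊆ α²_F(A)`. -/
def shadeStar {n : ℕ} (F : Finset (Finset (Fin n))) (D : Finset (Fin n)) :
    Finset (Finset (Fin n)) :=
  (shade F D).filter (fun A => (D ∩ alpha F 1 A).Nonempty ∨ D ⊆ alpha F 2 A)

theorem stmt_13 (n k d : ℕ) (hdk : d ≤ k)
    (F : Finset (Finset (Fin n))) (hF : ∀ A ∈ F, A.card = k)
    (A : Finset (Fin n)) (hA : A ∈ F) :
    ((Finset.powersetCard d A).filter (fun D => A ∈ shadeStar F D)).card =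
      k.choose d - ((A \ alpha F 1 A).card).choose d + ((alpha F 2 A).card).choose d := by
  classical
  have hAk : A.card = k := hF A hA
  set B := alpha F 1 A with hB
  set C2 := alpha F 2 A with hC2
  have hdisj : Disjoint B C2 := by
    rw [Finset.disjoint_left]
    intro x hx1 hx2
    simp only [hB, hC2, alpha, Finset.mem_filter] at hx1 hx2
    omega
  have hBA : B ⊆ A := Finset.filter_subset _ _
  have hC2A : C2 ⊆ A := Finset.filter_subset _ _
  have hfilter : (Finset.powersetCard d A).filter (fun D => A ∈ shadeStar F D)
      = (Finset.powersetCard d A).filter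
          (fun D => (D ∩ B).Nonempty ∨ D ⊆ C2) := by
    apply Finset.filter_congr
    intro D hD
    rw [Finset.mem_powersetCard] at hD
    simp [shadeStar, shade, Finset.mem_filter, hA, hD.1]
    exact Iff.rfl
  rw [hfilter, Finset.filter_or]
  have hsub : ∀ T : Finset (Fin n), T ⊆ A →
      (Finset.powersetCard d A).filter (fun D => D ⊆ T)
        = Finset.powersetCard d T := by
    intro T hT
    ext D
    simp only [Finset.mem_filter, Finset.mem_powersetCard]
    constructor
    · rintro ⟨⟨_, hc⟩, h⟩; exact ⟨h, hc⟩
    · rintro ⟨h, hc⟩; exact ⟨⟨h.trans hT, hc⟩, h⟩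
  have hdisj2 : Disjoint
      ((Finset.powersetCard d A).filter (fun D => (D ∩ B).Nonempty))
      ((Finset.powersetCard d A).filter (fun D => D ⊆ C2)) := by
    rw [Finset.disjoint_left]
    intro D hD1 hD2
    rw [Finset.mem_filter] at hD1 hD2
    obtain ⟨x, hx⟩ := hD1.2
    rw [Finset.mem_inter] at hx
    exact (Finset.disjoint_left.mp hdisj hx.2) (hD2.2 hx.1)
  rw [Finset.card_union_of_disjoint hdisj2]
  have h2 : ((Finset.powersetCard d A).filter (fun D => D ⊆ C2)).card
      = C2.card.choose d := by
    rw [hsub C2 hC2A, Finset.card_powersetCard]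
  have h1 : ((Finset.powersetCard d A).filter (fun D => (D ∩ B).Nonempty)).card
      = k.choose d - ((A \ B).card).choose d := by
    have hneg : (Finset.powersetCard d A).filter (fun D => ¬ (D ∩ B).Nonempty)
        = Finset.powersetCard d (A \ B) := by
      rw [← hsub (A \ B) (Finset.sdiff_subset)]
      apply Finset.filter_congr
      intro D hD
      rw [Finset.mem_powersetCard] at hD
      simp only [Finset.not_nonempty_iff_eq_empty, ← Finset.disjoint_iff_inter_eq_empty]
      constructor
      · intro h x hx
        exact Finset.mem_sdiff.mpr ⟨hD.1 hx, Finset.disjoint_left.mp h hx⟩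
      · intro h
        rw [Finset.disjoint_left]
        intro x hx hxB
        exact (Finset.mem_sdiff.mp (h hx)).2 hxB
    have := Finset.card_filter_add_card_filter_not
      (s := Finset.powersetCard d A) (p := fun D => (D ∩ B).Nonempty)
    rw [hneg, Finset.card_powersetCard, Finset.card_powersetCard, hAk] at this
    omega
  rw [h1, h2]
end

section
/- If {D_1,...,D_{d+1}} is a d-simplex consisting of (d+1)-element subsets of [n], then |D_1 ∪ ... ∪ D_{d+1}| ≤ 2(d+1); in particular it is a d-cluster. -/
/-- A `d`-simplex: `d+1` sets with empty total intersection such that any `d`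
of them have nonempty intersection. -/
def IsSimplex {n : ℕ} (d : ℕ) (S : Finset (Finset (Fin n))) : Prop :=
  S.card = d + 1 ∧ S.inf id = ∅ ∧ ∀ A ∈ S, ((S.erase A).inf id).Nonempty

/-- A `d`-simplex-cluster (of `k`-sets): a `d`-simplex whose union has size at most `2k`. -/
def IsSimplexCluster {n : ℕ} (k d : ℕ) (S : Finset (Finset (Fin n))) : Prop :=
  IsSimplex d S ∧ (S.sup id).card ≤ 2 * k

theorem stmt_16 (n d : ℕ) (S : Finset (Finset (Fin n)))
    (hcard : ∀ D ∈ S, D.card = d + 1) (hS : IsSimplex d S) :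
    (S.sup id).card ≤ 2 * (d + 1) ∧ IsSimplexCluster (d + 1) d S := by
  obtain ⟨hScard, hinf, hne⟩ := hS
  have hSne : S.Nonempty := Finset.card_pos.mp (by omega)
  obtain ⟨D0, hD0⟩ := hSne
  have hD0ne : D0.Nonempty := Finset.card_pos.mp (by rw [hcard D0 hD0]; omega)
  have : Nonempty (Fin n) := ⟨hD0ne.choose⟩
  have key : ∀ A ∈ S, ∃ x : Fin n, (∀ B ∈ S, B ≠ A → x ∈ B) ∧ x ∉ A := by
    intro A hA
    obtain ⟨x, hx⟩ := hne A hA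
    have hmem : ∀ B ∈ S, B ≠ A → x ∈ B := by
      intro B hB hBA
      have : x ∈ (S.erase A).inf id := hx
      have := Finset.inf_le (f := id) (Finset.mem_erase.mpr ⟨hBA, hB⟩)
      exact this hx
    refine ⟨x, hmem, fun hxA => ?_⟩
    have : x ∈ S.inf id := by
      rw [Finset.mem_inf]
      intro B hB
      by_cases hBA : B = A
      · subst hBA; exact hxA
      · exact hmem B hB hBA
    rw [hinf] at this
    exact absurd this (Finset.notMem_empty x)
  choose! x hx1 hx2 using key
  have hinj : Set.InjOn x S := by
    intro A hA B hB hAB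
    by_contra hne'
    have h1 : x A ∈ B := hx1 A hA B hB (fun h => hne' h.symm)
    rw [hAB] at h1
    exact hx2 B hB h1
  set T := S.image x with hT
  have hTcard : T.card = d + 1 := by
    rw [hT, Finset.card_image_of_injOn hinj, hScard]
  have hsub : ∀ D ∈ S, T.erase (x D) ⊆ D := by
    intro D hD y hy
    obtain ⟨hyne, hy⟩ := Finset.mem_erase.mp hy
    obtain ⟨A, hA, rfl⟩ := Finset.mem_image.mp hy
    have hAD : D ≠ A := by
      rintro rfl; exact hyne rfl
    exact hx1 A hA D hD hAD
  have hsd : ∀ D ∈ S, (D \ T).card ≤ 1 := by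
    intro D hD
    have h1 : D \ T ⊆ D \ T.erase (x D) := by
      apply Finset.sdiff_subset_sdiff le_rfl (Finset.erase_subset _ _)
    calc (D \ T).card ≤ (D \ T.erase (x D)).card := Finset.card_le_card h1
      _ = D.card - (T.erase (x D)).card := Finset.card_sdiff_of_subset (hsub D hD)
      _ ≤ 1 := by
          rw [hcard D hD, Finset.card_erase_of_mem (Finset.mem_image_of_mem x hD), hTcard]; omega
  have hunion : S.sup id ⊆ T ∪ S.biUnion (fun D => D \ T) := by
    intro y hy
    obtain ⟨D, hD, hyD⟩ := Finset.mem_sup.mp hy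
    by_cases hyT : y ∈ T
    · exact Finset.mem_union_left _ hyT
    · exact Finset.mem_union_right _ (Finset.mem_biUnion.mpr ⟨D, hD, Finset.mem_sdiff.mpr ⟨hyD, hyT⟩⟩)
  have hbound : (S.sup id).card ≤ 2 * (d + 1) := by
    calc (S.sup id).card ≤ (T ∪ S.biUnion (fun D => D \ T)).card := Finset.card_le_card hunion
      _ ≤ T.card + (S.biUnion (fun D => D \ T)).card := Finset.card_union_le _ _
      _ ≤ T.card + ∑ D ∈ S, (D \ T).card := by
          exact Nat.add_le_add_left (Finset.card_biUnion_le) _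
      _ ≤ (d + 1) + ∑ D ∈ S, 1 := by
          rw [hTcard]
          exact Nat.add_le_add_left (Finset.sum_le_sum hsd) _
      _ = 2 * (d + 1) := by rw [Finset.sum_const, smul_eq_mul, hScard]; ring
  exact ⟨hbound, ⟨⟨hScard, hinf, hne⟩, hbound⟩⟩
end
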